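/- Let t ↦ (x(t),y(t)), defined on its maximal interval [0,T) (with values in the open square), be a unit-speed geodesic of the square metric with initial conditions x(0) = 0, 0 < y(0) < 1, ẏ(0) = 0 and ẋ(0) > 0. Then there exists t ∈ (0,T) with y(t) = x(t) or y(t) = −x(t); moreover, if t* denotes the first such time, then y is strictly decreasing on (0,t*]. -/

import Mathlib

open Set


lemma cd2_iff {x : ℝ → ℝ} :
    ContDiff ℝ 2 x ↔ (Differentiable ℝ x ∧ Differentiable ℝ (deriv x) ∧
      Continuous (deriv (deriv x))) := by
  rw [show (2 : WithTop ℕ∞) = (1:WithTop ℕ∞) + 1 by norm_num, contDiff_succ_iff_deriv,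
    show (1 : WithTop ℕ∞) = (0:WithTop ℕ∞) + 1 by norm_num, contDiff_succ_iff_deriv,
    contDiff_zero]
  simp

/-- the function q = (1-x²)·y' and its derivative -/
lemma q_hasDeriv {x y : ℝ → ℝ} (hx : ContDiff ℝ 2 x) (hy : ContDiff ℝ 2 y) (t : ℝ) :
    HasDerivAt (fun s => (1 - x s ^ 2) * deriv y s)
      (-(2 * x t * deriv x t) * deriv y t + (1 - x t ^ 2) * deriv (deriv y) t) t := by
  obtain ⟨hxd, -, -⟩ := cd2_iff.mp hx
  obtain ⟨hyd, hyd1, -⟩ := cd2_iff.mp hy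
  have h1 : HasDerivAt (fun s => 1 - x s ^ 2) (-(2 * x t * deriv x t)) t := by
    have := ((hxd t).hasDerivAt.pow 2)
    simpa using (this.const_sub 1)
  exact h1.mul (hyd1 t).hasDerivAt

lemma q_deriv {x y : ℝ → ℝ} (hx : ContDiff ℝ 2 x) (hy : ContDiff ℝ 2 y) (t : ℝ) :
    deriv (fun s => (1 - x s ^ 2) * deriv y s) t
      = -(2 * x t * deriv x t) * deriv y t + (1 - x t ^ 2) * deriv (deriv y) t :=
  (q_hasDeriv hx hy t).deriv

lemma q_deriv_continuous {x y : ℝ → ℝ} (hx : ContDiff ℝ 2 x) (hy : ContDiff ℝ 2 y) :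
    Continuous (deriv (fun s => (1 - x s ^ 2) * deriv y s)) := by
  obtain ⟨hxd, hxd1, -⟩ := cd2_iff.mp hx
  obtain ⟨hyd, hyd1, hyc2⟩ := cd2_iff.mp hy
  have : Continuous (fun t => -(2 * x t * deriv x t) * deriv y t
      + (1 - x t ^ 2) * deriv (deriv y) t) := by
    have := hxd.continuous; have := hyd.continuous; have := hxd1.continuous; have := hyd1.continuous
    fun_prop
  exact this.congr (fun t => (q_deriv hx hy t).symm)

/-- If the geodesic equation for the `q`-derivative holds on `[0,b]`, `y ≥ 0` there,
`q 0 = 0` and `q' 0 < 0`, then `q < 0` on `(0,b]`. -/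
lemma q_neg {x y : ℝ → ℝ} (hx : ContDiff ℝ 2 x) (hy : ContDiff ℝ 2 y) {b : ℝ} (hb : 0 < b)
    (hd : ∀ t ∈ Icc (0:ℝ) b, deriv (fun s => (1 - x s ^ 2) * deriv y s) t
        = -(y t) * (deriv x t) ^ 2)
    (hypos : ∀ t ∈ Icc (0:ℝ) b, 0 ≤ y t)
    (hq0 : deriv y 0 = 0)
    (hy0 : 0 < y 0) (hdx0 : deriv x 0 ≠ 0) :
    ∀ t ∈ Ioc (0:ℝ) b, (1 - x t ^ 2) * deriv y t < 0 := by
  set q : ℝ → ℝ := fun s => (1 - x s ^ 2) * deriv y s with hq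
  have hqdiff : Differentiable ℝ q := fun t => (q_hasDeriv hx hy t).differentiableAt
  have hqc : Continuous q := hqdiff.continuous
  have hq0' : q 0 = 0 := by simp [hq, hq0]
  have hd0 : deriv q 0 < 0 := by
    rw [hd 0 ⟨le_rfl, hb.le⟩]
    have : 0 < (deriv x 0) ^ 2 := by positivity
    nlinarith
  -- find δ > 0 with deriv q < 0 on a small interval
  have hev : ∀ᶠ s in nhds (0:ℝ), deriv q s < 0 :=
    ((q_deriv_continuous hx hy).continuousAt).eventually_lt continuous_const.continuousAt hd0
  rw [Metric.eventually_nhds_iff] at hev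
  obtain ⟨δ₀, hδ₀, hδ⟩ := hev
  set δ := min (δ₀ / 2) b with hδdef
  have hδpos : 0 < δ := lt_min (by linarith) hb
  have hanti : StrictAntiOn q (Icc 0 δ) := by
    apply strictAntiOn_of_deriv_neg (convex_Icc _ _) hqc.continuousOn
    intro s hs
    rw [interior_Icc] at hs
    apply hδ
    rw [Real.dist_eq, sub_zero, abs_of_pos hs.1]
    have h2 := hs.2
    have : s < δ₀ / 2 := lt_of_lt_of_le h2 (min_le_left _ _)
    linarith
  have hanti2 : AntitoneOn q (Icc 0 b) := by
    apply antitoneOn_of_deriv_nonpos (convex_Icc _ _) hqc.continuousOn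
      (hqdiff.differentiableOn)
    intro s hs
    rw [interior_Icc] at hs
    rw [hd s ⟨hs.1.le, hs.2.le⟩]
    have := hypos s ⟨hs.1.le, hs.2.le⟩
    nlinarith [sq_nonneg (deriv x s)]
  intro t ht
  show q t < 0
  rcases le_or_gt t δ with h | h
  · have := hanti ⟨le_rfl, hδpos.le⟩ ⟨ht.1.le, h⟩ ht.1
    rw [hq0'] at this
    exact this
  · have h1 : q δ < 0 := by
      have := hanti ⟨le_rfl, hδpos.le⟩ ⟨hδpos.le, le_rfl⟩ hδpos
      rw [hq0'] at this
      exact this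
    have h2 : q t ≤ q δ := hanti2 ⟨hδpos.le, min_le_right _ _⟩ ⟨ht.1.le, ht.2⟩ h.le
    linarith

/-- If `y² - x²` never vanishes on `(0,b]` and is positive at `0` (with `y 0 > 0`),
then `y² - x² > 0` and `y > 0` on `[0,b]`. -/
lemma pos_on_of_no_crossing {x y : ℝ → ℝ} (hxc : Continuous x) (hyc : Continuous y)
    {b : ℝ} (hb : 0 ≤ b)
    (hy0 : 0 < y 0) (hx0 : x 0 = 0)
    (hnz : ∀ t ∈ Ioc (0:ℝ) b, (y t) ^ 2 - (x t) ^ 2 ≠ 0) :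
    ∀ t ∈ Icc (0:ℝ) b, 0 < (y t) ^ 2 - (x t) ^ 2 ∧ 0 < y t := by
  set w : ℝ → ℝ := fun s => (y s) ^ 2 - (x s) ^ 2 with hw
  have hwc : Continuous w := by fun_prop
  have hw0 : 0 < w 0 := by simp [hw, hx0]; positivity
  have hwpos : ∀ t ∈ Icc (0:ℝ) b, 0 < w t := by
    intro t ht
    by_contra hle
    push_neg at hle
    have ht0 : t ≠ 0 := by
      intro h; rw [h] at hle; linarith
    have h0t : (0:ℝ) < t := lt_of_le_of_ne ht.1 (Ne.symm ht0)
    have : (0:ℝ) ∈ Icc (w t) (w 0) := ⟨hle, hw0.le⟩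
    obtain ⟨c, hc, hc0⟩ := intermediate_value_Icc' ht.1 hwc.continuousOn this
    have : c ≠ 0 := by intro h; rw [h] at hc0; linarith
    exact hnz c ⟨lt_of_le_of_ne hc.1 (Ne.symm this), hc.2.trans ht.2⟩ hc0
  intro t ht
  refine ⟨hwpos t ht, ?_⟩
  by_contra hle
  push_neg at hle
  have : (0:ℝ) ∈ Icc (y t) (y 0) := ⟨hle, hy0.le⟩
  obtain ⟨c, hc, hc0⟩ := intermediate_value_Icc' ht.1 hyc.continuousOn this
  have := hwpos c ⟨hc.1, hc.2.trans ht.2⟩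
  rw [hw] at this
  simp only [hc0] at this
  nlinarith [sq_nonneg (x c)]

lemma hasDerivAt_fst' {E F : Type*} [NormedAddCommGroup E] [NormedSpace ℝ E]
    [NormedAddCommGroup F] [NormedSpace ℝ F]
    {f : ℝ → E × F} {f' : E × F} {t : ℝ} (h : HasDerivAt f f' t) :
    HasDerivAt (fun s => (f s).1) f'.1 t := by
  simpa using (h.hasFDerivAt.fst).hasDerivAt

lemma hasDerivAt_snd' {E F : Type*} [NormedAddCommGroup E] [NormedSpace ℝ E]
    [NormedAddCommGroup F] [NormedSpace ℝ F]
    {f : ℝ → E × F} {f' : E × F} {t : ℝ} (h : HasDerivAt f f' t) :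
    HasDerivAt (fun s => (f s).2) f'.2 t := by
  simpa using (h.hasFDerivAt.snd).hasDerivAt

noncomputable def Vf : ℝ × ℝ × ℝ × ℝ → ℝ × ℝ × ℝ × ℝ := fun p =>
  (p.2.2.1, p.2.2.2,
    2 * p.2.1 / (1 - p.2.1 ^ 2) * p.2.2.1 * p.2.2.2 - p.1 / (1 - p.2.1 ^ 2) * p.2.2.2 ^ 2,
    -p.2.1 / (1 - p.1 ^ 2) * p.2.2.1 ^ 2 + 2 * p.1 / (1 - p.1 ^ 2) * p.2.2.1 * p.2.2.2)

lemma contDiffAt_comp1 {p : ℝ × ℝ × ℝ × ℝ} : ContDiffAt ℝ 1 (fun q : ℝ × ℝ × ℝ × ℝ => q.1) p :=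
  contDiffAt_fst
lemma contDiffAt_comp2 {p : ℝ × ℝ × ℝ × ℝ} : ContDiffAt ℝ 1 (fun q : ℝ × ℝ × ℝ × ℝ => q.2.1) p :=
  contDiffAt_fst.comp p contDiffAt_snd
lemma contDiffAt_comp3 {p : ℝ × ℝ × ℝ × ℝ} : ContDiffAt ℝ 1 (fun q : ℝ × ℝ × ℝ × ℝ => q.2.2.1) p :=
  (contDiffAt_fst.comp _ contDiffAt_snd).comp p contDiffAt_snd
lemma contDiffAt_comp4 {p : ℝ × ℝ × ℝ × ℝ} : ContDiffAt ℝ 1 (fun q : ℝ × ℝ × ℝ × ℝ => q.2.2.2) p :=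
  ((contDiffAt_snd.comp _ contDiffAt_snd).comp p contDiffAt_snd)

lemma contDiffAt_Vf {p : ℝ × ℝ × ℝ × ℝ} (h1 : 1 - p.1 ^ 2 ≠ 0) (h2 : 1 - p.2.1 ^ 2 ≠ 0) :
    ContDiffAt ℝ 1 Vf p := by
  have c1 : ContDiffAt ℝ 1 (fun q : ℝ × ℝ × ℝ × ℝ => q.1) p := contDiffAt_comp1
  have c2 : ContDiffAt ℝ 1 (fun q : ℝ × ℝ × ℝ × ℝ => q.2.1) p := contDiffAt_comp2
  have c3 : ContDiffAt ℝ 1 (fun q : ℝ × ℝ × ℝ × ℝ => q.2.2.1) p := contDiffAt_comp3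
  have c4 : ContDiffAt ℝ 1 (fun q : ℝ × ℝ × ℝ × ℝ => q.2.2.2) p := contDiffAt_comp4
  have d1 : ContDiffAt ℝ 1 (fun q : ℝ × ℝ × ℝ × ℝ => 1 - q.1 ^ 2) p :=
    contDiffAt_const.sub (c1.pow 2)
  have d2 : ContDiffAt ℝ 1 (fun q : ℝ × ℝ × ℝ × ℝ => 1 - q.2.1 ^ 2) p :=
    contDiffAt_const.sub (c2.pow 2)
  refine ContDiffAt.prodMk c3 (ContDiffAt.prodMk c4 (ContDiffAt.prodMk ?_ ?_))
  · exact ((((contDiffAt_const.mul c2).div d2 h2).mul c3).mul c4).sub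
      ((c1.div d2 h2).mul (c4.pow 2))
  · exact ((c2.neg.div d1 h1).mul (c3.pow 2)).add
      ((((contDiffAt_const.mul c1).div d1 h1).mul c3).mul c4)

/-- equality at a right endpoint by continuity -/
lemma eq_at_right_endpoint {g h : ℝ → ℝ} {τ : ℝ} (hτ : 0 < τ)
    (hg : ContinuousWithinAt g (Ico 0 τ) τ) (hh : ContinuousWithinAt h (Ico 0 τ) τ)
    (he : ∀ t ∈ Ico (0:ℝ) τ, g t = h t) : g τ = h τ := by
  have h1 : τ ∈ closure (Ico (0:ℝ) τ) := by
    rw [closure_Ico (by linarith : (0:ℝ) ≠ τ)]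
    exact ⟨hτ.le, le_rfl⟩
  haveI hne : (nhdsWithin τ (Ico (0:ℝ) τ)).NeBot := mem_closure_iff_nhdsWithin_neBot.mp h1
  exact tendsto_nhds_unique (l := nhdsWithin τ (Ico (0:ℝ) τ)) hg
    (hh.congr' (by filter_upwards [self_mem_nhdsWithin] using fun s hs => (he s hs).symm))
/-- Generic C² gluing of a global C² function `φ` with a local solution jet `(f1,f3,V3)`
agreeing with the jet of `φ` on `(τ-δ, τ]`, extended by a quadratic polynomial past `r`. -/
lemma glue_C2 (φ f1 f3 V3 : ℝ → ℝ) (τ r δ : ℝ) (hτr : τ < r) (hδ : 0 < δ)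
    (hφd : Differentiable ℝ φ) (hφd1 : Differentiable ℝ (deriv φ))
    (hφc2 : Continuous (deriv (deriv φ)))
    (hf13 : ∀ t ∈ Ioo (τ - δ) (r + δ), HasDerivAt f1 (f3 t) t)
    (hf3V : ∀ t ∈ Ioo (τ - δ) (r + δ), HasDerivAt f3 (V3 t) t)
    (hV3c : ∀ t ∈ Ioo (τ - δ) (r + δ), ContinuousAt V3 t)
    (heq1 : ∀ s ∈ Ioc (τ - δ) τ, φ s = f1 s)
    (heq2 : ∀ s ∈ Ioc (τ - δ) τ, deriv φ s = f3 s)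
    (heq3 : ∀ s ∈ Ioc (τ - δ) τ, deriv (deriv φ) s = V3 s) :
    ∃ X : ℝ → ℝ, ContDiff ℝ 2 X ∧
      (∀ t, t ≤ τ → X t = φ t ∧ deriv X t = deriv φ t ∧
        deriv (deriv X) t = deriv (deriv φ) t) ∧
      (∀ t ∈ Icc τ r, X t = f1 t ∧ deriv X t = f3 t ∧ deriv (deriv X) t = V3 t) := by
  classical
  set P : ℝ → ℝ := fun t => f1 r + f3 r * (t - r) + V3 r / 2 * (t - r) ^ 2 with hPdef
  set X : ℝ → ℝ := fun t => if t ≤ τ then φ t else if t ≤ r then f1 t else P t with hX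
  set G1 : ℝ → ℝ := fun t => if t ≤ τ then deriv φ t else if t ≤ r then f3 t
    else f3 r + V3 r * (t - r) with hG1
  set G2 : ℝ → ℝ := fun t => if t ≤ τ then deriv (deriv φ) t else if t ≤ r then V3 t
    else V3 r with hG2
  have hrmem : r ∈ Ioo (τ - δ) (r + δ) := ⟨by linarith, by linarith⟩
  -- polynomial derivatives
  have hP1 : ∀ t : ℝ, HasDerivAt P (f3 r + V3 r * (t - r)) t := by
    intro t
    have h1 : HasDerivAt (fun s : ℝ => s - r) 1 t := (hasDerivAt_id t).sub_const r
    have h2 : HasDerivAt (fun s : ℝ => f3 r * (s - r)) (f3 r) t := by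
      simpa using h1.const_mul (f3 r)
    have h3 : HasDerivAt (fun s : ℝ => V3 r / 2 * (s - r) ^ 2) (V3 r * (t - r)) t := by
      have := (h1.fun_pow 2).const_mul (V3 r / 2)
      refine this.congr_deriv ?_
      simp; ring
    simpa [hPdef] using ((h2.const_add (f1 r)).fun_add h3)
  have hP2 : ∀ t : ℝ, HasDerivAt (fun s => f3 r + V3 r * (s - r)) (V3 r) t := by
    intro t
    have h1 : HasDerivAt (fun s : ℝ => s - r) 1 t := (hasDerivAt_id t).sub_const r
    simpa using (h1.const_mul (V3 r)).const_add (f3 r)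
  have hPr : P r = f1 r := by simp [hPdef]
  -- equality of the pieces on (τ-δ, r]
  have hXf1 : ∀ s ∈ Ioc (τ - δ) r, X s = f1 s := by
    intro s hs
    by_cases h : s ≤ τ
    · simp only [hX, if_pos h]; exact heq1 s ⟨hs.1, h⟩
    · simp only [hX, if_neg h, if_pos hs.2]
  have hG1f3 : ∀ s ∈ Ioc (τ - δ) r, G1 s = f3 s := by
    intro s hs
    by_cases h : s ≤ τ
    · simp only [hG1, if_pos h]; exact heq2 s ⟨hs.1, h⟩
    · simp only [hG1, if_neg h, if_pos hs.2]
  have hG2V3 : ∀ s ∈ Ioc (τ - δ) r, G2 s = V3 s := by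
    intro s hs
    by_cases h : s ≤ τ
    · simp only [hG2, if_pos h]; exact heq3 s ⟨hs.1, h⟩
    · simp only [hG2, if_neg h, if_pos hs.2]
  have hIoc_mem : Ioc (τ - δ) r ∈ nhdsWithin r (Iic r) := by
    have h1 : Iic r ∩ Ioi (τ - δ) ∈ nhdsWithin r (Iic r) :=
      inter_mem_nhdsWithin _ (Ioi_mem_nhds (by linarith))
    rwa [inter_comm, Ioi_inter_Iic] at h1
  have hXP : ∀ s, r < s → X s = P s := fun s hs => by
    simp only [hX, if_neg (not_le.mpr (lt_trans hτr hs)), if_neg (not_le.mpr hs)]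
  have hG1P : ∀ s, r < s → G1 s = f3 r + V3 r * (s - r) := fun s hs => by
    simp only [hG1, if_neg (not_le.mpr (lt_trans hτr hs)), if_neg (not_le.mpr hs)]
  have hG2P : ∀ s, r < s → G2 s = V3 r := fun s hs => by
    simp only [hG2, if_neg (not_le.mpr (lt_trans hτr hs)), if_neg (not_le.mpr hs)]
  -- first derivative of X
  have hXd : ∀ t, HasDerivAt X (G1 t) t := by
    intro t
    rcases lt_trichotomy t τ with ht | ht | ht
    · have hev : X =ᶠ[nhds t] φ := by
        filter_upwards [Iio_mem_nhds ht] with s hs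
        simp only [hX, if_pos (le_of_lt (show s < τ from hs))]
      have := ((hφd t).hasDerivAt).congr_of_eventuallyEq hev
      simpa only [hG1, if_pos ht.le] using this
    · have hev : X =ᶠ[nhds t] f1 := by
        filter_upwards [Ioo_mem_nhds (show τ - δ < t by rw [ht]; linarith)
          (show t < r by rw [ht]; linarith)] with s hs
        exact hXf1 s ⟨hs.1, hs.2.le⟩
      have := (hf13 t ⟨by rw [ht]; linarith, by rw [ht]; linarith⟩).congr_of_eventuallyEq hev
      have hval : G1 t = f3 t := by
        simp only [hG1, if_pos ht.le]
        exact heq2 t ⟨by rw [ht]; linarith, ht.le⟩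
      rwa [hval]
    · rcases lt_trichotomy t r with htr | htr | htr
      · have hev : X =ᶠ[nhds t] f1 := by
          filter_upwards [Ioo_mem_nhds (show τ - δ < t by linarith) htr] with s hs
          exact hXf1 s ⟨hs.1, hs.2.le⟩
        have := (hf13 t ⟨by linarith, by linarith⟩).congr_of_eventuallyEq hev
        have hval : G1 t = f3 t := by simp only [hG1, if_neg (not_le.mpr ht), if_pos htr.le]
        rwa [hval]
      · have htmem : t ∈ Ioo (τ - δ) (r + δ) := by rw [htr]; exact hrmem
        have htIoc : t ∈ Ioc (τ - δ) r := ⟨by linarith, htr.le⟩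
        have hval : G1 t = f3 t := hG1f3 t htIoc
        rw [hval]
        have hleft : HasDerivWithinAt X (f3 t) (Iic t) t := by
          refine ((hf13 t htmem).hasDerivWithinAt).congr_of_eventuallyEq ?_ (hXf1 t htIoc)
          rw [htr]
          filter_upwards [hIoc_mem] with s hs using hXf1 s hs
        have hright : HasDerivWithinAt X (f3 t) (Ici t) t := by
          have hPt : HasDerivAt P (f3 t) t := by
            have := hP1 t
            rw [htr] at this ⊢
            simpa using this
          refine (hPt.hasDerivWithinAt).congr ?_ (by rw [hXf1 t htIoc, htr, hPr])
          intro s hs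
          rcases eq_or_lt_of_le (show t ≤ s from hs) with h | h
          · rw [← h, hXf1 t htIoc, htr, hPr]
          · exact hXP s (htr ▸ h)
        have := hleft.union hright
        rwa [Iic_union_Ici, hasDerivWithinAt_univ] at this
      · have hev : X =ᶠ[nhds t] P := by
          filter_upwards [Ioi_mem_nhds htr] with s hs
          exact hXP s hs
        have := (hP1 t).congr_of_eventuallyEq hev
        rwa [hG1P t htr]
  -- second derivative
  have hG1d : ∀ t, HasDerivAt G1 (G2 t) t := by
    intro t
    rcases lt_trichotomy t τ with ht | ht | ht
    · have hev : G1 =ᶠ[nhds t] deriv φ := by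
        filter_upwards [Iio_mem_nhds ht] with s hs
        simp only [hG1, if_pos (le_of_lt (show s < τ from hs))]
      have := ((hφd1 t).hasDerivAt).congr_of_eventuallyEq hev
      simpa only [hG2, if_pos ht.le] using this
    · have hev : G1 =ᶠ[nhds t] f3 := by
        filter_upwards [Ioo_mem_nhds (show τ - δ < t by rw [ht]; linarith)
          (show t < r by rw [ht]; linarith)] with s hs
        exact hG1f3 s ⟨hs.1, hs.2.le⟩
      have := (hf3V t ⟨by rw [ht]; linarith, by rw [ht]; linarith⟩).congr_of_eventuallyEq hev
      have hval : G2 t = V3 t := by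
        simp only [hG2, if_pos ht.le]
        exact heq3 t ⟨by rw [ht]; linarith, ht.le⟩
      rwa [hval]
    · rcases lt_trichotomy t r with htr | htr | htr
      · have hev : G1 =ᶠ[nhds t] f3 := by
          filter_upwards [Ioo_mem_nhds (show τ - δ < t by linarith) htr] with s hs
          exact hG1f3 s ⟨hs.1, hs.2.le⟩
        have := (hf3V t ⟨by linarith, by linarith⟩).congr_of_eventuallyEq hev
        have hval : G2 t = V3 t := by simp only [hG2, if_neg (not_le.mpr ht), if_pos htr.le]
        rwa [hval]
      · have htmem : t ∈ Ioo (τ - δ) (r + δ) := by rw [htr]; exact hrmem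
        have htIoc : t ∈ Ioc (τ - δ) r := ⟨by linarith, htr.le⟩
        have hval : G2 t = V3 t := hG2V3 t htIoc
        rw [hval]
        have hleft : HasDerivWithinAt G1 (V3 t) (Iic t) t := by
          refine ((hf3V t htmem).hasDerivWithinAt).congr_of_eventuallyEq ?_ (hG1f3 t htIoc)
          rw [htr]
          filter_upwards [hIoc_mem] with s hs using hG1f3 s hs
        have hright : HasDerivWithinAt G1 (V3 t) (Ici t) t := by
          have hPt : HasDerivAt (fun s => f3 r + V3 r * (s - r)) (V3 t) t := by
            rw [htr]; exact hP2 r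
          refine (hPt.hasDerivWithinAt).congr ?_ ?_
          · intro s hs
            rcases eq_or_lt_of_le (show t ≤ s from hs) with h | h
            · rw [← h, hG1f3 t htIoc, htr]; simp
            · rw [hG1P s (htr ▸ h)]
          · rw [hG1f3 t htIoc, htr]; simp
        have := hleft.union hright
        rwa [Iic_union_Ici, hasDerivWithinAt_univ] at this
      · have hev : G1 =ᶠ[nhds t] (fun s => f3 r + V3 r * (s - r)) := by
          filter_upwards [Ioi_mem_nhds htr] with s hs
          exact hG1P s hs
        have := (hP2 t).congr_of_eventuallyEq hev
        rwa [hG2P t htr]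
  -- continuity of G2
  have hG2c : Continuous G2 := by
    rw [continuous_iff_continuousAt]
    intro t
    rcases lt_trichotomy t τ with ht | ht | ht
    · have hev : G2 =ᶠ[nhds t] deriv (deriv φ) := by
        filter_upwards [Iio_mem_nhds ht] with s hs
        simp only [hG2, if_pos (le_of_lt (show s < τ from hs))]
      exact (hφc2.continuousAt).congr hev.symm
    · have hG2τ : G2 t = deriv (deriv φ) t := by simp only [hG2, if_pos ht.le]
      have hleft : ContinuousWithinAt G2 (Iic t) t := by
        refine (hφc2.continuousAt.continuousWithinAt).congr ?_ hG2τ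
        intro s hs
        simp only [hG2, if_pos (le_trans (show s ≤ t from hs) ht.le)]
      have hright : ContinuousWithinAt G2 (Ici t) t := by
        have hc : ContinuousWithinAt V3 (Ici t) t :=
          (hV3c t ⟨by rw [ht]; linarith, by rw [ht]; linarith⟩).continuousWithinAt
        refine hc.congr_of_eventuallyEq ?_ ?_
        · have h1 : Ici t ∩ Iio r ∈ nhdsWithin t (Ici t) :=
            inter_mem_nhdsWithin _ (Iio_mem_nhds (by rw [ht]; exact hτr))
          filter_upwards [h1] with s hs
          rcases eq_or_lt_of_le (show t ≤ s from hs.1) with h | h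
          · rw [← h]
            simp only [hG2, if_pos ht.le]
            exact heq3 t ⟨by rw [ht]; linarith, ht.le⟩
          · exact hG2V3 s ⟨by rw [ht] at h; linarith, (hs.2).le⟩
        · simp only [hG2, if_pos ht.le]
          exact heq3 t ⟨by rw [ht]; linarith, ht.le⟩
      rw [ContinuousAt, ← nhdsLE_sup_nhdsGE t, Filter.tendsto_sup]
      exact ⟨hleft, hright⟩
    · rcases lt_trichotomy t r with htr | htr | htr
      · have hev : G2 =ᶠ[nhds t] V3 := by
          filter_upwards [Ioo_mem_nhds (show τ - δ < t by linarith) htr] with s hs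
          exact hG2V3 s ⟨hs.1, hs.2.le⟩
        exact ((hV3c t ⟨by linarith, by linarith⟩)).congr hev.symm
      · have htmem : t ∈ Ioo (τ - δ) (r + δ) := by rw [htr]; exact hrmem
        have htIoc : t ∈ Ioc (τ - δ) r := ⟨by linarith, htr.le⟩
        have hleft : ContinuousWithinAt G2 (Iic t) t := by
          refine ((hV3c t htmem).continuousWithinAt).congr_of_eventuallyEq ?_ (hG2V3 t htIoc)
          rw [htr]
          filter_upwards [hIoc_mem] with s hs using hG2V3 s hs
        have hright : ContinuousWithinAt G2 (Ici t) t := by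
          refine (continuousWithinAt_const (b := G2 t)).congr ?_ rfl
          intro s hs
          rcases eq_or_lt_of_le (show t ≤ s from hs) with h | h
          · rw [← h]
          · rw [hG2P s (htr ▸ h), hG2V3 t htIoc, htr]
        rw [ContinuousAt, ← nhdsLE_sup_nhdsGE t, Filter.tendsto_sup]
        exact ⟨hleft, hright⟩
      · have hev : G2 =ᶠ[nhds t] (fun _ => V3 r) := by
          filter_upwards [Ioi_mem_nhds htr] with s hs
          exact hG2P s hs
        exact (continuousAt_const).congr hev.symm
  -- assemble
  have hd1 : deriv X = G1 := funext fun t => (hXd t).deriv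
  have hd2 : deriv G1 = G2 := funext fun t => (hG1d t).deriv
  refine ⟨X, ?_, ?_, ?_⟩
  · rw [cd2_iff]
    refine ⟨fun t => (hXd t).differentiableAt, ?_, ?_⟩
    · rw [hd1]; exact fun t => (hG1d t).differentiableAt
    · rw [hd1, hd2]; exact hG2c
  · intro t ht
    refine ⟨by simp only [hX, if_pos ht], ?_, ?_⟩
    · rw [hd1]; simp only [hG1, if_pos ht]
    · rw [hd1, hd2]; simp only [hG2, if_pos ht]
  · intro t ht
    refine ⟨?_, ?_, ?_⟩
    · rcases eq_or_lt_of_le ht.1 with h | h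
      · simp only [hX, if_pos (le_of_eq h.symm)]
        exact heq1 t ⟨by linarith, le_of_eq h.symm⟩
      · exact hXf1 t ⟨by linarith, ht.2⟩
    · rw [hd1]
      rcases eq_or_lt_of_le ht.1 with h | h
      · simp only [hG1, if_pos (le_of_eq h.symm)]
        exact heq2 t ⟨by linarith, le_of_eq h.symm⟩
      · exact hG1f3 t ⟨by linarith, ht.2⟩
    · rw [hd1, hd2]
      rcases eq_or_lt_of_le ht.1 with h | h
      · simp only [hG2, if_pos (le_of_eq h.symm)]
        exact heq3 t ⟨by linarith, le_of_eq h.symm⟩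
      · exact hG2V3 t ⟨by linarith, ht.2⟩

@[simp] lemma Vf_c1 (p : ℝ × ℝ × ℝ × ℝ) : (Vf p).1 = p.2.2.1 := rfl
@[simp] lemma Vf_c2 (p : ℝ × ℝ × ℝ × ℝ) : (Vf p).2.1 = p.2.2.2 := rfl
@[simp] lemma Vf_c3 (p : ℝ × ℝ × ℝ × ℝ) : (Vf p).2.2.1 =
    2 * p.2.1 / (1 - p.2.1 ^ 2) * p.2.2.1 * p.2.2.2 - p.1 / (1 - p.2.1 ^ 2) * p.2.2.2 ^ 2 := rfl
@[simp] lemma Vf_c4 (p : ℝ × ℝ × ℝ × ℝ) : (Vf p).2.2.2 =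
    -p.2.1 / (1 - p.1 ^ 2) * p.2.2.1 ^ 2 + 2 * p.1 / (1 - p.1 ^ 2) * p.2.2.1 * p.2.2.2 := rfl

lemma le_endpoint {g : ℝ → ℝ} {τ c : ℝ} (hτ : 0 < τ) (hg : Continuous g)
    (h : ∀ t ∈ Ico (0:ℝ) τ, g t ≤ c) : g τ ≤ c := by
  have h1 : τ ∈ closure (Ico (0:ℝ) τ) := by
    rw [closure_Ico (by linarith : (0:ℝ) ≠ τ)]
    exact ⟨hτ.le, le_rfl⟩
  haveI : (nhdsWithin τ (Ico (0:ℝ) τ)).NeBot := mem_closure_iff_nhdsWithin_neBot.mp h1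
  exact le_of_tendsto (hg.continuousAt.continuousWithinAt
    (s := Ico (0:ℝ) τ)) (by filter_upwards [self_mem_nhdsWithin] using h)

set_option maxHeartbeats 2000000 in
lemma extend_geodesic (x y : ℝ → ℝ) (τ K : ℝ) (hτ : 0 < τ) (hK0 : 0 ≤ K) (hK1 : K < 1)
    (hx : ContDiff ℝ 2 x) (hy : ContDiff ℝ 2 y)
    (hbd : ∀ t ∈ Ico (0:ℝ) τ, |x t| ≤ K ∧ |y t| ≤ K)
    (hgeo₁ : ∀ t ∈ Ico (0:ℝ) τ, deriv (deriv x) t =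
      2 * y t / (1 - (y t) ^ 2) * deriv x t * deriv y t
        - x t / (1 - (y t) ^ 2) * (deriv y t) ^ 2)
    (hgeo₂ : ∀ t ∈ Ico (0:ℝ) τ, deriv (deriv y) t =
      -(y t) / (1 - (x t) ^ 2) * (deriv x t) ^ 2
        + 2 * x t / (1 - (x t) ^ 2) * deriv x t * deriv y t)
    (hunit : ∀ t ∈ Ico (0:ℝ) τ,
      (1 - (y t) ^ 2) * (deriv x t) ^ 2 + (1 - (x t) ^ 2) * (deriv y t) ^ 2 = 1) :
    ∃ ε > (0:ℝ), ∃ x' y' : ℝ → ℝ, ContDiff ℝ 2 x' ∧ ContDiff ℝ 2 y' ∧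
      (∀ t ∈ Ico (0:ℝ) τ, x' t = x t ∧ y' t = y t) ∧
      (∀ t ∈ Ico (0:ℝ) (τ + ε),
        (|x' t| < 1 ∧ |y' t| < 1) ∧
        deriv (deriv x') t =
          2 * y' t / (1 - (y' t) ^ 2) * deriv x' t * deriv y' t
            - x' t / (1 - (y' t) ^ 2) * (deriv y' t) ^ 2 ∧
        deriv (deriv y') t =
          -(y' t) / (1 - (x' t) ^ 2) * (deriv x' t) ^ 2
            + 2 * x' t / (1 - (x' t) ^ 2) * deriv x' t * deriv y' t ∧
        (1 - (y' t) ^ 2) * (deriv x' t) ^ 2 + (1 - (x' t) ^ 2) * (deriv y' t) ^ 2 = 1) := by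
  obtain ⟨hxd, hxd1, hxc2⟩ := cd2_iff.mp hx
  obtain ⟨hyd, hyd1, hyc2⟩ := cd2_iff.mp hy
  have hxc : Continuous x := hxd.continuous
  have hyc : Continuous y := hyd.continuous
  have hx1c : Continuous (deriv x) := hxd1.continuous
  have hy1c : Continuous (deriv y) := hyd1.continuous
  -- bounds at τ
  have hxτ : |x τ| ≤ K := le_endpoint (g := fun t => |x t|) hτ (by fun_prop) (fun t ht => (hbd t ht).1)
  have hyτ : |y τ| ≤ K := le_endpoint (g := fun t => |y t|) hτ (by fun_prop) (fun t ht => (hbd t ht).2)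
  have hx2τ : 0 < 1 - x τ ^ 2 := by nlinarith [sq_abs (x τ), abs_nonneg (x τ)]
  have hy2τ : 0 < 1 - y τ ^ 2 := by nlinarith [sq_abs (y τ), abs_nonneg (y τ)]
  have hcy : ContinuousAt (fun t => 1 - y t ^ 2) τ := by fun_prop
  have hcx : ContinuousAt (fun t => 1 - x t ^ 2) τ := by fun_prop
  -- the geodesic equations and unit-speed hold also at `t = τ` by continuity
  have hkey1 : ∀ t ∈ Icc (0:ℝ) τ, deriv (deriv x) t =
      2 * y t / (1 - (y t) ^ 2) * deriv x t * deriv y t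
        - x t / (1 - (y t) ^ 2) * (deriv y t) ^ 2 := by
    intro t ht
    rcases lt_or_eq_of_le ht.2 with h | h
    · exact hgeo₁ t ⟨ht.1, h⟩
    · rw [h]
      refine eq_at_right_endpoint hτ (hxc2.continuousAt.continuousWithinAt) ?_ hgeo₁
      exact ((((continuousAt_const.mul hyc.continuousAt).div hcy hy2τ.ne').mul
        hx1c.continuousAt).mul hy1c.continuousAt).sub
        ((hxc.continuousAt.div hcy hy2τ.ne').mul ((hy1c.continuousAt).pow 2))
        |>.continuousWithinAt
  have hkey2 : ∀ t ∈ Icc (0:ℝ) τ, deriv (deriv y) t =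
      -(y t) / (1 - (x t) ^ 2) * (deriv x t) ^ 2
        + 2 * x t / (1 - (x t) ^ 2) * deriv x t * deriv y t := by
    intro t ht
    rcases lt_or_eq_of_le ht.2 with h | h
    · exact hgeo₂ t ⟨ht.1, h⟩
    · rw [h]
      refine eq_at_right_endpoint hτ (hyc2.continuousAt.continuousWithinAt) ?_ hgeo₂
      exact (((hyc.continuousAt.neg.div hcx hx2τ.ne').mul ((hx1c.continuousAt).pow 2)).add
        ((((continuousAt_const.mul hxc.continuousAt).div hcx hx2τ.ne').mul
        hx1c.continuousAt).mul hy1c.continuousAt)).continuousWithinAt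
  have hkeyu : ∀ t ∈ Icc (0:ℝ) τ,
      (1 - (y t) ^ 2) * (deriv x t) ^ 2 + (1 - (x t) ^ 2) * (deriv y t) ^ 2 = 1 := by
    intro t ht
    rcases lt_or_eq_of_le ht.2 with h | h
    · exact hunit t ⟨ht.1, h⟩
    · rw [h]
      refine eq_at_right_endpoint hτ ?_ continuousAt_const.continuousWithinAt hunit
      exact (by fun_prop : ContinuousAt (fun t =>
        (1 - (y t) ^ 2) * (deriv x t) ^ 2 + (1 - (x t) ^ 2) * (deriv y t) ^ 2) τ).continuousWithinAt
  -- the 4-dimensional jet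
  set F : ℝ → ℝ × ℝ × ℝ × ℝ := fun t => (x t, y t, deriv x t, deriv y t) with hFdef
  have hFc : Continuous F := by fun_prop
  have hF' : ∀ t ∈ Icc (0:ℝ) τ, HasDerivAt F (Vf (F t)) t := by
    intro t ht
    have hprod : HasDerivAt F
        (deriv x t, deriv y t, deriv (deriv x) t, deriv (deriv y) t) t :=
      ((hxd t).hasDerivAt).prodMk (((hyd t).hasDerivAt).prodMk
        (((hxd1 t).hasDerivAt).prodMk ((hyd1 t).hasDerivAt)))
    have hVeq : Vf (F t) = (deriv x t, deriv y t, deriv (deriv x) t, deriv (deriv y) t) := by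
      rw [hkey1 t ht, hkey2 t ht]
      rfl
    rw [hVeq]; exact hprod
  set x₀ : ℝ × ℝ × ℝ × ℝ := (x τ, y τ, deriv x τ, deriv y τ) with hx₀def
  have hV0 : ContDiffAt ℝ 1 Vf x₀ := contDiffAt_Vf hx2τ.ne' hy2τ.ne'
  obtain ⟨f, hfτ, ε₀, hε₀, hode₀⟩ := hV0.exists_forall_mem_closedBall_exists_eq_forall_mem_Ioo_hasDerivAt₀ τ
  set f1 : ℝ → ℝ := fun t => (f t).1 with hf1def
  set f2 : ℝ → ℝ := fun t => (f t).2.1 with hf2def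
  set f3 : ℝ → ℝ := fun t => (f t).2.2.1 with hf3def
  set f4 : ℝ → ℝ := fun t => (f t).2.2.2 with hf4def
  set V3 : ℝ → ℝ := fun t => 2 * f2 t / (1 - f2 t ^ 2) * f3 t * f4 t
    - f1 t / (1 - f2 t ^ 2) * f4 t ^ 2 with hV3def
  set V4 : ℝ → ℝ := fun t => -(f2 t) / (1 - f1 t ^ 2) * f3 t ^ 2
    + 2 * f1 t / (1 - f1 t ^ 2) * f3 t * f4 t with hV4def
  obtain ⟨L, sN, hsN, hlip⟩ := hV0.exists_lipschitzOnWith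
  obtain ⟨ρ, hρpos, hball⟩ := Metric.mem_nhds_iff.mp hsN
  have hτmem : τ ∈ Ioo (τ - ε₀) (τ + ε₀) := ⟨by linarith, by linarith⟩
  have hfct : ContinuousAt f τ := (hode₀ τ hτmem).differentiableAt.continuousAt
  set K1 : ℝ := (1 + K) / 2 with hK1def
  have hKK1 : K < K1 := by rw [hK1def]; linarith
  have hK1lt : K1 < 1 := by rw [hK1def]; linarith
  -- eventual properties near τ
  have hev : ∀ᶠ t in nhds τ, (t ∈ Ioo (τ - ε₀) (τ + ε₀)) ∧ |f1 t| < K1 ∧ |f2 t| < K1 ∧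
      f t ∈ Metric.ball x₀ ρ ∧ F t ∈ Metric.ball x₀ ρ := by
    have h1 : ∀ᶠ t in nhds τ, t ∈ Ioo (τ - ε₀) (τ + ε₀) :=
      Ioo_mem_nhds hτmem.1 hτmem.2
    have hf1ca : ContinuousAt (fun t => |f1 t|) τ :=
      (continuous_abs.continuousAt).comp ((continuous_fst.continuousAt).comp hfct)
    have hf2ca : ContinuousAt (fun t => |f2 t|) τ :=
      (continuous_abs.continuousAt).comp
        (((continuous_fst.comp continuous_snd).continuousAt).comp hfct)
    have h2 : ∀ᶠ t in nhds τ, |f1 t| < K1 := by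
      refine hf1ca.eventually_lt continuousAt_const ?_
      show |f1 τ| < K1
      have : f1 τ = x τ := by rw [hf1def]; simp only [hfτ, hx₀def]
      rw [this]; exact lt_of_le_of_lt hxτ hKK1
    have h3 : ∀ᶠ t in nhds τ, |f2 t| < K1 := by
      refine hf2ca.eventually_lt continuousAt_const ?_
      show |f2 τ| < K1
      have : f2 τ = y τ := by rw [hf2def]; simp only [hfτ, hx₀def]
      rw [this]; exact lt_of_le_of_lt hyτ hKK1
    have h4 : ∀ᶠ t in nhds τ, f t ∈ Metric.ball x₀ ρ := by
      have : Metric.ball x₀ ρ ∈ nhds (f τ) := by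
        rw [hfτ]; exact Metric.ball_mem_nhds _ hρpos
      exact hfct.preimage_mem_nhds this
    have h5 : ∀ᶠ t in nhds τ, F t ∈ Metric.ball x₀ ρ := by
      have : Metric.ball x₀ ρ ∈ nhds (F τ) := Metric.ball_mem_nhds _ hρpos
      exact hFc.continuousAt.preimage_mem_nhds this
    exact h1.and (h2.and (h3.and (h4.and h5)))
  rw [Metric.eventually_nhds_iff] at hev
  obtain ⟨δ₁, hδ₁, hPr⟩ := hev
  obtain ⟨δ, hδpos, hδ₁', hδτ⟩ : ∃ δ : ℝ, 0 < δ ∧ δ < δ₁ ∧ δ ≤ τ / 2 :=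
    ⟨min (δ₁ / 2) (τ / 2), lt_min (by linarith) (by linarith),
      lt_of_le_of_lt (min_le_left _ _) (by linarith), min_le_right _ _⟩
  have hPd : ∀ t : ℝ, |t - τ| ≤ δ → (t ∈ Ioo (τ - ε₀) (τ + ε₀)) ∧ |f1 t| < K1 ∧ |f2 t| < K1 ∧
      f t ∈ Metric.ball x₀ ρ ∧ F t ∈ Metric.ball x₀ ρ := by
    intro t h
    apply hPr
    rw [Real.dist_eq]
    linarith
  -- uniqueness of the solution on the left overlap
  have hEq : EqOn F f (Icc (τ - δ) τ) := by
    refine ODE_solution_unique_of_mem_Icc_left (v := fun _ => Vf)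
      (s := fun _ => Metric.ball x₀ ρ) (K := L)
      (fun _ _ => hlip.mono hball) (hFc.continuousOn) ?_ ?_ ?_ ?_ ?_ hfτ.symm
    · intro t ht
      refine (hF' t ⟨by linarith [ht.1], ht.2⟩).hasDerivWithinAt
    · intro t ht
      exact (hPd t (by rw [abs_le]; constructor <;> linarith [ht.1, ht.2])).2.2.2.2
    · intro t ht
      exact ((hode₀ t (hPd t (by rw [abs_le]; constructor <;>
        linarith [ht.1, ht.2])).1).differentiableAt.continuousAt).continuousWithinAt
    · intro t ht
      exact (hode₀ t (hPd t (by rw [abs_le]; constructor <;>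
        linarith [ht.1, ht.2])).1).hasDerivWithinAt
    · intro t ht
      exact (hPd t (by rw [abs_le]; constructor <;> linarith [ht.1, ht.2])).2.2.2.1
  obtain ⟨r, hrdef⟩ : ∃ r : ℝ, r = τ + δ / 4 := ⟨_, rfl⟩
  have habs : ∀ t ∈ Ioo (τ - δ/4) (r + δ/4), |t - τ| ≤ δ := by
    intro t ht
    rw [abs_le]
    constructor <;> [skip; skip] <;>
      [linarith [ht.1]; linarith [ht.2, show r + δ/4 = τ + δ/2 by rw [hrdef]; ring]]
  -- derivative facts for the local solution
  have hode : ∀ t ∈ Ioo (τ - δ/4) (r + δ/4), HasDerivAt f (Vf (f t)) t :=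
    fun t ht => hode₀ t (hPd t (habs t ht)).1
  have hgood : ∀ t ∈ Ioo (τ - δ/4) (r + δ/4), |f1 t| < K1 ∧ |f2 t| < K1 :=
    fun t ht => ⟨(hPd t (habs t ht)).2.1, (hPd t (habs t ht)).2.2.1⟩
  have hgood1 : ∀ t ∈ Ioo (τ - δ/4) (r + δ/4), 0 < 1 - f1 t ^ 2 := by
    intro t ht
    have := (hgood t ht).1
    nlinarith [sq_abs (f1 t), abs_nonneg (f1 t)]
  have hgood2 : ∀ t ∈ Ioo (τ - δ/4) (r + δ/4), 0 < 1 - f2 t ^ 2 := by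
    intro t ht
    have := (hgood t ht).2
    nlinarith [sq_abs (f2 t), abs_nonneg (f2 t)]
  have hf13 : ∀ t ∈ Ioo (τ - δ/4) (r + δ/4), HasDerivAt f1 (f3 t) t :=
    fun t ht => hasDerivAt_fst' (hode t ht)
  have hf24 : ∀ t ∈ Ioo (τ - δ/4) (r + δ/4), HasDerivAt f2 (f4 t) t :=
    fun t ht => hasDerivAt_fst' (hasDerivAt_snd' (hode t ht))
  have hf3V : ∀ t ∈ Ioo (τ - δ/4) (r + δ/4), HasDerivAt f3 (V3 t) t :=
    fun t ht => hasDerivAt_fst' (hasDerivAt_snd' (hasDerivAt_snd' (hode t ht)))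
  have hf4V : ∀ t ∈ Ioo (τ - δ/4) (r + δ/4), HasDerivAt f4 (V4 t) t :=
    fun t ht => hasDerivAt_snd' (hasDerivAt_snd' (hasDerivAt_snd' (hode t ht)))
  have hfcont : ∀ t ∈ Ioo (τ - δ/4) (r + δ/4), ContinuousAt f t :=
    fun t ht => (hode t ht).differentiableAt.continuousAt
  have hV3c : ∀ t ∈ Ioo (τ - δ/4) (r + δ/4), ContinuousAt V3 t := by
    intro t ht
    have h2 := (hgood2 t ht).ne'
    have c1 : ContinuousAt f1 t := (continuous_fst.continuousAt).comp (hfcont t ht)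
    have c2 : ContinuousAt f2 t :=
      ((continuous_fst.comp continuous_snd).continuousAt).comp (hfcont t ht)
    have c3 : ContinuousAt f3 t :=
      ((continuous_fst.comp (continuous_snd.comp continuous_snd)).continuousAt).comp (hfcont t ht)
    have c4 : ContinuousAt f4 t :=
      ((continuous_snd.comp (continuous_snd.comp continuous_snd)).continuousAt).comp (hfcont t ht)
    have hden : ContinuousAt (fun s => 1 - f2 s ^ 2) t := continuousAt_const.sub (c2.pow 2)
    exact ((((continuousAt_const.mul c2).div hden h2).mul c3).mul c4).sub
      ((c1.div hden h2).mul (c4.pow 2))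
  have hV4c : ∀ t ∈ Ioo (τ - δ/4) (r + δ/4), ContinuousAt V4 t := by
    intro t ht
    have h1 := (hgood1 t ht).ne'
    have c1 : ContinuousAt f1 t := (continuous_fst.continuousAt).comp (hfcont t ht)
    have c2 : ContinuousAt f2 t :=
      ((continuous_fst.comp continuous_snd).continuousAt).comp (hfcont t ht)
    have c3 : ContinuousAt f3 t :=
      ((continuous_fst.comp (continuous_snd.comp continuous_snd)).continuousAt).comp (hfcont t ht)
    have c4 : ContinuousAt f4 t :=
      ((continuous_snd.comp (continuous_snd.comp continuous_snd)).continuousAt).comp (hfcont t ht)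
    have hden : ContinuousAt (fun s => 1 - f1 s ^ 2) t := continuousAt_const.sub (c1.pow 2)
    exact ((c2.neg.div hden h1).mul (c3.pow 2)).add
      ((((continuousAt_const.mul c1).div hden h1).mul c3).mul c4)
  -- jets agree on the overlap
  have hmemIcc : ∀ s ∈ Ioc (τ - δ/4) τ, s ∈ Icc (τ - δ) τ :=
    fun s hs => ⟨by linarith [hs.1], hs.2⟩
  have hmemIcc0 : ∀ s ∈ Ioc (τ - δ/4) τ, s ∈ Icc (0:ℝ) τ :=
    fun s hs => ⟨by linarith [hs.1], hs.2⟩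
  have heqx1 : ∀ s ∈ Ioc (τ - δ/4) τ, x s = f1 s :=
    fun s hs => congrArg Prod.fst (hEq (hmemIcc s hs))
  have heqy1 : ∀ s ∈ Ioc (τ - δ/4) τ, y s = f2 s :=
    fun s hs => congrArg (fun p : ℝ × ℝ × ℝ × ℝ => p.2.1) (hEq (hmemIcc s hs))
  have heqx2 : ∀ s ∈ Ioc (τ - δ/4) τ, deriv x s = f3 s :=
    fun s hs => congrArg (fun p : ℝ × ℝ × ℝ × ℝ => p.2.2.1) (hEq (hmemIcc s hs))
  have heqy2 : ∀ s ∈ Ioc (τ - δ/4) τ, deriv y s = f4 s :=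
    fun s hs => congrArg (fun p : ℝ × ℝ × ℝ × ℝ => p.2.2.2) (hEq (hmemIcc s hs))
  have heqx3 : ∀ s ∈ Ioc (τ - δ/4) τ, deriv (deriv x) s = V3 s := by
    intro s hs
    rw [hkey1 s (hmemIcc0 s hs), hV3def]
    rw [heqx1 s hs, heqy1 s hs, heqx2 s hs, heqy2 s hs]
  have heqy3 : ∀ s ∈ Ioc (τ - δ/4) τ, deriv (deriv y) s = V4 s := by
    intro s hs
    rw [hkey2 s (hmemIcc0 s hs), hV4def]
    rw [heqx1 s hs, heqy1 s hs, heqx2 s hs, heqy2 s hs]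
  -- glue
  have hτr : τ < r := by rw [hrdef]; linarith
  obtain ⟨X, hXc2, hXold, hXnew⟩ := glue_C2 x f1 f3 V3 τ r (δ/4) hτr (by linarith)
    hxd hxd1 hxc2 hf13 hf3V hV3c heqx1 heqx2 heqx3
  obtain ⟨Y, hYc2, hYold, hYnew⟩ := glue_C2 y f2 f4 V4 τ r (δ/4) hτr (by linarith)
    hyd hyd1 hyc2 hf24 hf4V hV4c heqy1 heqy2 heqy3
  -- conservation of the unit-speed condition
  set N : ℝ → ℝ := fun t => (1 - f2 t ^ 2) * f3 t ^ 2 + (1 - f1 t ^ 2) * f4 t ^ 2 with hNdef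
  have hN' : ∀ t ∈ Ioo (τ - δ/4) (r + δ/4), HasDerivAt N 0 t := by
    intro t ht
    have hA : HasDerivAt (fun s => 1 - f2 s ^ 2) (-(2 * f2 t * f4 t)) t := by
      have := ((hf24 t ht).pow 2).const_sub 1
      simpa using this
    have hB : HasDerivAt (fun s => f3 s ^ 2) (2 * f3 t * V3 t) t := by
      have := (hf3V t ht).fun_pow 2
      simpa using this
    have hC : HasDerivAt (fun s => 1 - f1 s ^ 2) (-(2 * f1 t * f3 t)) t := by
      have := ((hf13 t ht).pow 2).const_sub 1
      simpa using this
    have hD : HasDerivAt (fun s => f4 s ^ 2) (2 * f4 t * V4 t) t := by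
      have := (hf4V t ht).fun_pow 2
      simpa using this
    have hN : HasDerivAt N
        ((-(2 * f2 t * f4 t)) * f3 t ^ 2 + (1 - f2 t ^ 2) * (2 * f3 t * V3 t)
          + ((-(2 * f1 t * f3 t)) * f4 t ^ 2 + (1 - f1 t ^ 2) * (2 * f4 t * V4 t))) t :=
      (hA.mul hB).add (hC.mul hD)
    have hzero : (-(2 * f2 t * f4 t)) * f3 t ^ 2 + (1 - f2 t ^ 2) * (2 * f3 t * V3 t)
          + ((-(2 * f1 t * f3 t)) * f4 t ^ 2 + (1 - f1 t ^ 2) * (2 * f4 t * V4 t)) = 0 := by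
      rw [hV3def, hV4def]
      have h1 := (hgood1 t ht).ne'
      have h2 := (hgood2 t ht).ne'
      field_simp
      ring
    rwa [hzero] at hN
  have hNval : ∀ t ∈ Icc τ r, N t = 1 := by
    have hsub : Icc τ r ⊆ Ioo (τ - δ/4) (r + δ/4) := by
      intro s hs
      rw [mem_Icc] at hs
      rw [mem_Ioo]
      constructor
      · linarith [hs.1, hδpos]
      · linarith [hs.2, hδpos]
    have hNc : ContinuousOn N (Icc τ r) :=
      fun s hs => ((hN' s (hsub hs)).differentiableAt.continuousAt).continuousWithinAt
    have hNd : DifferentiableOn ℝ N (interior (Icc τ r)) := by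
      rw [interior_Icc]
      exact fun s hs => ((hN' s (hsub (Ioo_subset_Icc_self hs))).differentiableAt).differentiableWithinAt
    have hmono : MonotoneOn N (Icc τ r) := by
      apply monotoneOn_of_deriv_nonneg (convex_Icc _ _) hNc hNd
      intro s hs
      rw [interior_Icc] at hs
      exact ((hN' s (hsub (Ioo_subset_Icc_self hs))).deriv).ge
    have hanti : AntitoneOn N (Icc τ r) := by
      apply antitoneOn_of_deriv_nonpos (convex_Icc _ _) hNc hNd
      intro s hs
      rw [interior_Icc] at hs
      exact ((hN' s (hsub (Ioo_subset_Icc_self hs))).deriv).le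
    have hNτ : N τ = 1 := by
      have e1 : f1 τ = x τ := by rw [hf1def]; simp only [hfτ, hx₀def]
      have e2 : f2 τ = y τ := by rw [hf2def]; simp only [hfτ, hx₀def]
      have e3 : f3 τ = deriv x τ := by rw [hf3def]; simp only [hfτ, hx₀def]
      have e4 : f4 τ = deriv y τ := by rw [hf4def]; simp only [hfτ, hx₀def]
      rw [hNdef]
      simp only [e1, e2, e3, e4]
      exact hkeyu τ ⟨hτ.le, le_rfl⟩
    intro t ht
    have h1 := hmono (left_mem_Icc.mpr hτr.le) ht ht.1
    have h2 := hanti (left_mem_Icc.mpr hτr.le) ht ht.1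
    rw [hNτ] at h1 h2
    linarith
  -- assemble the extension
  refine ⟨δ/4, by linarith, X, Y, hXc2, hYc2, ?_, ?_⟩
  · intro t ht
    exact ⟨(hXold t ht.2.le).1, (hYold t ht.2.le).1⟩
  · intro t ht
    rcases le_or_gt t τ with h | h
    · obtain ⟨ex0, ex1, ex2⟩ := hXold t h
      obtain ⟨ey0, ey1, ey2⟩ := hYold t h
      have hbK : |x t| ≤ K ∧ |y t| ≤ K := by
        rcases lt_or_eq_of_le h with h' | h'
        · exact hbd t ⟨ht.1, h'⟩
        · rw [h']; exact ⟨hxτ, hyτ⟩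
      refine ⟨⟨by rw [ex0]; linarith [hbK.1], by rw [ey0]; linarith [hbK.2]⟩, ?_, ?_, ?_⟩
      · rw [ex0, ex1, ex2, ey0, ey1]
        exact hkey1 t ⟨ht.1, h⟩
      · rw [ex0, ex1, ey0, ey1, ey2]
        exact hkey2 t ⟨ht.1, h⟩
      · rw [ex0, ex1, ey0, ey1]
        exact hkeyu t ⟨ht.1, h⟩
    · have htr : t ∈ Icc τ r := ⟨h.le, by rw [hrdef]; linarith [ht.2]⟩
      have htIoo : t ∈ Ioo (τ - δ/4) (r + δ/4) :=
        ⟨by linarith [htr.1], by linarith [htr.2]⟩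
      obtain ⟨ex0, ex1, ex2⟩ := hXnew t htr
      obtain ⟨ey0, ey1, ey2⟩ := hYnew t htr
      refine ⟨⟨?_, ?_⟩, ?_, ?_, ?_⟩
      · rw [ex0]; exact lt_trans (hgood t htIoo).1 hK1lt
      · rw [ey0]; exact lt_trans (hgood t htIoo).2 hK1lt
      · rw [ex0, ex1, ex2, ey0, ey1, hV3def]
      · rw [ex0, ex1, ey0, ey1, ey2, hV4def]
      · rw [ex0, ex1, ey0, ey1]
        exact hNval t htr

lemma sq_diff_zero_iff (a c : ℝ) : a ^ 2 - c ^ 2 = 0 ↔ (a = c ∨ a = -c) := by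
  constructor
  · intro h
    have h2 : (a - c) * (a + c) = 0 := by linear_combination h
    rcases mul_eq_zero.mp h2 with h3 | h3
    · left; linarith
    · right; linarith
  · rintro (rfl | rfl) <;> ring

lemma abs_le_of_sq_lt {a b : ℝ} (h : a ^ 2 < b ^ 2) (hb : 0 ≤ b) : |a| ≤ b := by
  nlinarith [abs_nonneg a, sq_abs a]


set_option maxHeartbeats 1000000 in
/-- A unit-speed geodesic of the metric `ds² = (1−y²)dx² + (1−x²)dy²` on the open square,
defined on its maximal interval `[0,T)` and meeting the `y`-axis horizontally at time `0`
(with `x(0) = 0`, `0 < y(0) < 1`, `ẏ(0) = 0`, `ẋ(0) > 0`), must meet one of the lines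
`y = ±x`; moreover `y` is strictly decreasing on `(0, t*]` where `t*` is the first
meeting time. -/
theorem geodesic_in_H_meets_diagonal
    (x y : ℝ → ℝ) (T : EReal) (hT : 0 < T)
    (hx : ContDiff ℝ 2 x) (hy : ContDiff ℝ 2 y)
    (hsq : ∀ t : ℝ, 0 ≤ t → (t : EReal) < T → |x t| < 1 ∧ |y t| < 1)
    (hgeo₁ : ∀ t : ℝ, 0 ≤ t → (t : EReal) < T →
      deriv (deriv x) t =
        2 * y t / (1 - (y t) ^ 2) * deriv x t * deriv y t
          - x t / (1 - (y t) ^ 2) * (deriv y t) ^ 2)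
    (hgeo₂ : ∀ t : ℝ, 0 ≤ t → (t : EReal) < T →
      deriv (deriv y) t =
        -(y t) / (1 - (x t) ^ 2) * (deriv x t) ^ 2
          + 2 * x t / (1 - (x t) ^ 2) * deriv x t * deriv y t)
    (hunit : ∀ t : ℝ, 0 ≤ t → (t : EReal) < T →
      (1 - (y t) ^ 2) * (deriv x t) ^ 2 + (1 - (x t) ^ 2) * (deriv y t) ^ 2 = 1)
    (hx0 : x 0 = 0) (hy0 : 0 < y 0) (hy0' : y 0 < 1)
    (hdy0 : deriv y 0 = 0) (hdx0 : 0 < deriv x 0)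
    (hmax : ¬ ∃ (T' : EReal) (x' y' : ℝ → ℝ), T < T' ∧
      ContDiff ℝ 2 x' ∧ ContDiff ℝ 2 y' ∧
      (∀ t : ℝ, 0 ≤ t → (t : EReal) < T → x' t = x t ∧ y' t = y t) ∧
      (∀ t : ℝ, 0 ≤ t → (t : EReal) < T' →
        (|x' t| < 1 ∧ |y' t| < 1) ∧
        deriv (deriv x') t =
          2 * y' t / (1 - (y' t) ^ 2) * deriv x' t * deriv y' t
            - x' t / (1 - (y' t) ^ 2) * (deriv y' t) ^ 2 ∧
        deriv (deriv y') t =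
          -(y' t) / (1 - (x' t) ^ 2) * (deriv x' t) ^ 2
            + 2 * x' t / (1 - (x' t) ^ 2) * deriv x' t * deriv y' t ∧
        (1 - (y' t) ^ 2) * (deriv x' t) ^ 2 + (1 - (x' t) ^ 2) * (deriv y' t) ^ 2 = 1)) :
    (∃ t : ℝ, 0 < t ∧ (t : EReal) < T ∧ (y t = x t ∨ y t = -x t)) ∧
    ∀ tstar : ℝ,
      IsLeast {t : ℝ | 0 < t ∧ (t : EReal) < T ∧ (y t = x t ∨ y t = -x t)} tstar →
      StrictAntiOn y (Set.Ioc 0 tstar) := by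
  obtain ⟨hxd, hxd1, hxc2⟩ := cd2_iff.mp hx
  obtain ⟨hyd, hyd1, hyc2⟩ := cd2_iff.mp hy
  have hxc : Continuous x := hxd.continuous
  have hyc : Continuous y := hyd.continuous
  -- the square bounds give nonvanishing denominators
  have hden : ∀ t : ℝ, 0 ≤ t → (t : EReal) < T → 0 < 1 - x t ^ 2 ∧ 0 < 1 - y t ^ 2 := by
    intro t ht0 htT
    obtain ⟨h1, h2⟩ := hsq t ht0 htT
    constructor
    · nlinarith [sq_abs (x t), abs_nonneg (x t)]
    · nlinarith [sq_abs (y t), abs_nonneg (y t)]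
  -- derivative of q = (1-x²)·y'
  have hqd : ∀ t : ℝ, 0 ≤ t → (t : EReal) < T →
      deriv (fun s => (1 - x s ^ 2) * deriv y s) t = -(y t) * (deriv x t) ^ 2 := by
    intro t ht0 htT
    rw [q_deriv hx hy t, hgeo₂ t ht0 htT]
    have h1 := (hden t ht0 htT).1
    field_simp
    ring
  -- main auxiliary, for any b in the interval with no crossing on (0,b]
  have main_aux : ∀ b : ℝ, 0 < b → (b : EReal) < T →
      (∀ s ∈ Ioc (0:ℝ) b, (y s) ^ 2 - (x s) ^ 2 ≠ 0) →
      (∀ t ∈ Icc (0:ℝ) b, 0 < (y t) ^ 2 - (x t) ^ 2 ∧ 0 < y t) ∧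
      (∀ t ∈ Ioc (0:ℝ) b, (1 - x t ^ 2) * deriv y t < 0) := by
    intro b hb hbT hnz
    have hpos := pos_on_of_no_crossing hxc hyc hb.le hy0 hx0 hnz
    have hIccT : ∀ t ∈ Icc (0:ℝ) b, (t : EReal) < T := fun t ht =>
      lt_of_le_of_lt (EReal.coe_le_coe_iff.mpr ht.2) hbT
    have hd : ∀ t ∈ Icc (0:ℝ) b, deriv (fun s => (1 - x s ^ 2) * deriv y s) t
        = -(y t) * (deriv x t) ^ 2 := fun t ht => hqd t ht.1 (hIccT t ht)
    exact ⟨hpos, q_neg hx hy hb hd (fun t ht => (hpos t ht).2.le) hdy0 hy0 (ne_of_gt hdx0)⟩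
  -- strict negativity of y' from that
  have hyd_neg : ∀ b : ℝ, 0 < b → (b : EReal) < T →
      (∀ s ∈ Ioc (0:ℝ) b, (y s) ^ 2 - (x s) ^ 2 ≠ 0) →
      ∀ t ∈ Ioc (0:ℝ) b, deriv y t < 0 := by
    intro b hb hbT hnz t ht
    have hq := (main_aux b hb hbT hnz).2 t ht
    have htT : (t : EReal) < T := lt_of_le_of_lt (EReal.coe_le_coe_iff.mpr ht.2) hbT
    have hx2 := (hden t ht.1.le htT).1
    nlinarith
  -- y is ≤ y 0 on no-crossing intervals
  have hy_le : ∀ b : ℝ, 0 < b → (b : EReal) < T →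
      (∀ s ∈ Ioc (0:ℝ) b, (y s) ^ 2 - (x s) ^ 2 ≠ 0) →
      ∀ t ∈ Icc (0:ℝ) b, y t ≤ y 0 := by
    intro b hb hbT hnz
    have hanti : AntitoneOn y (Icc 0 b) := by
      apply antitoneOn_of_deriv_nonpos (convex_Icc _ _) hyc.continuousOn
        hyd.differentiableOn
      intro s hs
      rw [interior_Icc] at hs
      exact (hyd_neg b hb hbT hnz s ⟨hs.1, hs.2.le⟩).le
    intro t ht
    exact hanti (left_mem_Icc.mpr hb.le) ht ht.1
  -- Part 1: existence of a crossing
  have part1 : ∃ t : ℝ, 0 < t ∧ (t : EReal) < T ∧ (y t = x t ∨ y t = -x t) := by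
    by_contra hcon
    push_neg at hcon
    have hnzAll : ∀ s : ℝ, 0 < s → (s : EReal) < T → (y s) ^ 2 - (x s) ^ 2 ≠ 0 := by
      intro s hs hsT h
      rcases (sq_diff_zero_iff (y s) (x s)).mp h with h' | h'
      · exact (hcon s hs hsT).1 h'
      · exact (hcon s hs hsT).2 h'
    rcases eq_or_ne T ⊤ with hTtop | hTtop
    · -- infinite time: linear decay of y gives a contradiction
      have hallT : ∀ b : ℝ, (b : EReal) < T := by
        intro b; rw [hTtop]; exact EReal.coe_lt_top b
      have hnz : ∀ b : ℝ, 0 < b → ∀ s ∈ Ioc (0:ℝ) b, (y s) ^ 2 - (x s) ^ 2 ≠ 0 :=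
        fun b _ s hs => hnzAll s hs.1 (hallT s)
      set c : ℝ := (1 - x 1 ^ 2) * deriv y 1 with hcdef
      have hc : c < 0 := (main_aux 1 one_pos (hallT 1) (hnz 1 one_pos)).2 1 ⟨one_pos, le_rfl⟩
      -- q is antitone on [0, b] for every b
      have hq_le : ∀ b : ℝ, 1 ≤ b → (1 - x b ^ 2) * deriv y b ≤ c := by
        intro b hb1
        have hb : 0 < b := by linarith
        have hanti : AntitoneOn (fun s => (1 - x s ^ 2) * deriv y s) (Icc 0 b) := by
          apply antitoneOn_of_deriv_nonpos (convex_Icc _ _)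
            (Continuous.continuousOn (by have := hyd1.continuous; fun_prop))
            (fun s _ => ((q_hasDeriv hx hy s).differentiableAt).differentiableWithinAt)
          intro s hs
          rw [interior_Icc] at hs
          rw [hqd s hs.1.le (hallT s)]
          have hys := ((main_aux b hb (hallT b) (hnz b hb)).1 s ⟨hs.1.le, hs.2.le⟩).2
          nlinarith [sq_nonneg (deriv x s)]
        exact hanti ⟨by linarith, hb1⟩ ⟨hb.le, le_rfl⟩ hb1
      have hyd_le : ∀ b : ℝ, 1 ≤ b → deriv y b ≤ c := by
        intro b hb1
        have hb : 0 < b := by linarith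
        have h1 := hq_le b hb1
        have h2 := (hden b hb.le (hallT b)).1
        have h3 : deriv y b < 0 := by nlinarith
        nlinarith [mul_nonpos_of_nonpos_of_nonneg h3.le (sq_nonneg (x b))]
      set M : ℝ := 1 + (y 1 + 1) / (-c) with hMdef
      have hy1pos : 0 < y 1 :=
        ((main_aux 1 one_pos (hallT 1) (hnz 1 one_pos)).1 1 ⟨zero_le_one, le_rfl⟩).2
      have hM1 : 1 < M := by
        rw [hMdef]
        have : 0 < (y 1 + 1) / (-c) := div_pos (by linarith) (by linarith)
        linarith
      have hanti : AntitoneOn (fun t => y t - c * t) (Icc 1 M) := by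
        apply antitoneOn_of_deriv_nonpos (convex_Icc _ _)
          (Continuous.continuousOn (by fun_prop))
        · intro s _
          exact (((hyd s).hasDerivAt.sub ((hasDerivAt_id s).const_mul c)).differentiableAt).differentiableWithinAt
        · intro s hs
          rw [interior_Icc] at hs
          have hder : deriv (fun t => y t - c * t) s = deriv y s - c := by
            have := ((hyd s).hasDerivAt.fun_sub ((hasDerivAt_id s).const_mul c))
            simpa using this.deriv
          rw [hder]
          have := hyd_le s hs.1.le
          linarith
      have hfin := hanti (left_mem_Icc.mpr hM1.le) (right_mem_Icc.mpr hM1.le) hM1.le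
      simp only at hfin
      -- y M ≤ y 1 + c (M - 1) = -1
      have hcM : c * (M - 1) = -(y 1 + 1) := by
        have hc0 : c ≠ 0 := ne_of_lt hc
        rw [hMdef, add_sub_cancel_left]
        field_simp [hc0]
      have hyM : y M ≤ -1 := by nlinarith [hfin]
      have := ((main_aux M (by linarith) (hallT M) (hnz M (by linarith))).1 M
        ⟨by linarith, le_rfl⟩).2
      linarith
    · -- finite time: the geodesic extends, contradicting maximality
      have hTbot : T ≠ ⊥ := by
        intro h; rw [h] at hT; exact absurd hT (by simp)
      set τ : ℝ := T.toReal with hτdef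
      have hτT : ((τ : ℝ) : EReal) = T := EReal.coe_toReal hTtop hTbot
      have hτpos : 0 < τ := by
        have := hT
        rw [← hτT] at this
        exact_mod_cast this
      have hltT : ∀ t : ℝ, t < τ → (t : EReal) < T := by
        intro t h; rw [← hτT]; exact_mod_cast h
      have hbd : ∀ t ∈ Ico (0:ℝ) τ, |x t| ≤ y 0 ∧ |y t| ≤ y 0 := by
        intro t ht
        rcases eq_or_lt_of_le ht.1 with h0 | h0
        · rw [← h0, hx0]
          simp [abs_of_pos hy0, hy0.le]
        · have hnz : ∀ s ∈ Ioc (0:ℝ) t, (y s) ^ 2 - (x s) ^ 2 ≠ 0 :=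
            fun s hs => hnzAll s hs.1 (hltT s (lt_of_le_of_lt hs.2 ht.2))
          have hw := (main_aux t h0 (hltT t ht.2) hnz).1 t ⟨h0.le, le_rfl⟩
          have hyle := hy_le t h0 (hltT t ht.2) hnz t ⟨h0.le, le_rfl⟩
          constructor
          · have h1 : x t ^ 2 < y t ^ 2 := by linarith [hw.1]
            have h2 : y t ≤ y 0 := hyle
            exact abs_le_of_sq_lt (by nlinarith [hw.2]) hy0.le
          · rw [abs_of_pos hw.2]; exact hyle
      obtain ⟨ε, hε, x', y', hx'c, hy'c, hagree, hcond⟩ :=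
        extend_geodesic x y τ (y 0) hτpos hy0.le hy0' hx hy hbd
          (fun t ht => hgeo₁ t ht.1 (hltT t ht.2))
          (fun t ht => hgeo₂ t ht.1 (hltT t ht.2))
          (fun t ht => hunit t ht.1 (hltT t ht.2))
      apply hmax
      refine ⟨((τ + ε : ℝ) : EReal), x', y', ?_, hx'c, hy'c, ?_, ?_⟩
      · rw [← hτT]; exact_mod_cast (by linarith : τ < τ + ε)
      · intro t ht0 htT
        have htτ : t < τ := by rw [← hτT] at htT; exact_mod_cast htT
        exact hagree t ⟨ht0, htτ⟩
      · intro t ht0 htT'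
        have htτ : t < τ + ε := by exact_mod_cast htT'
        exact hcond t ⟨ht0, htτ⟩
  refine ⟨part1, ?_⟩
  -- Part 2: strict monotonicity up to the first crossing
  intro tstar hstar
  obtain ⟨⟨hts_pos, hts_T, _⟩, hts_lb⟩ := hstar
  have hnz : ∀ s ∈ Ioc (0:ℝ) tstar, s ≠ tstar → (y s) ^ 2 - (x s) ^ 2 ≠ 0 := by
    intro s hs hsne h
    have hsT : (s : EReal) < T := lt_of_le_of_lt (EReal.coe_le_coe_iff.mpr hs.2) hts_T
    have hmem : s ∈ {t : ℝ | 0 < t ∧ (t : EReal) < T ∧ (y t = x t ∨ y t = -x t)} :=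
      ⟨hs.1, hsT, (sq_diff_zero_iff (y s) (x s)).mp h⟩
    exact absurd (hts_lb hmem) (not_le.mpr (lt_of_le_of_ne hs.2 hsne))
  -- y ≥ 0 on [0, tstar]
  have hypos_lt : ∀ t, 0 < t → t < tstar → 0 < y t := by
    intro t h0 hlt
    have hnz' : ∀ s ∈ Ioc (0:ℝ) t, (y s) ^ 2 - (x s) ^ 2 ≠ 0 :=
      fun s hs => hnz s ⟨hs.1, le_trans hs.2 hlt.le⟩ (by linarith [hs.2])
    exact ((main_aux t h0 (lt_trans (EReal.coe_lt_coe_iff.mpr hlt) hts_T) hnz').1 t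
      ⟨h0.le, le_rfl⟩).2
  have hy_star_nonneg : 0 ≤ y tstar := by
    by_contra hneg
    push_neg at hneg
    have hev : ∀ᶠ s in nhds tstar, y s < 0 :=
      hyc.continuousAt.eventually_lt continuousAt_const hneg
    rw [Metric.eventually_nhds_iff] at hev
    obtain ⟨d, hd, hdp⟩ := hev
    set s : ℝ := max (tstar - d / 2) (tstar / 2) with hsdef
    have hs1 : 0 < s := lt_max_of_lt_right (by linarith)
    have hs2 : s < tstar := max_lt (by linarith) (by linarith)
    have hs3 : |s - tstar| < d := by
      rw [abs_lt]
      constructor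
      · have : tstar - d / 2 ≤ s := le_max_left _ _
        linarith
      · linarith
    have := hdp (show dist s tstar < d by rw [Real.dist_eq]; exact hs3)
    linarith [hypos_lt s hs1 hs2]
  have hy_nonneg : ∀ t ∈ Icc (0:ℝ) tstar, 0 ≤ y t := by
    intro t ht
    rcases eq_or_lt_of_le ht.2 with h | h
    · rw [h]; exact hy_star_nonneg
    · rcases eq_or_lt_of_le ht.1 with h0 | h0
      · rw [← h0]; exact hy0.le
      · exact (hypos_lt t h0 h).le
  -- q < 0 on (0, tstar]
  have hIccT : ∀ t ∈ Icc (0:ℝ) tstar, (t : EReal) < T := fun t ht =>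
    lt_of_le_of_lt (EReal.coe_le_coe_iff.mpr ht.2) hts_T
  have hqneg := q_neg hx hy hts_pos
    (fun t ht => hqd t ht.1 (hIccT t ht)) hy_nonneg hdy0 hy0 (ne_of_gt hdx0)
  -- conclude
  apply strictAntiOn_of_deriv_neg (convex_Ioc _ _) hyc.continuousOn
  intro t ht
  rw [interior_Ioc] at ht
  have hq := hqneg t ⟨ht.1, ht.2.le⟩
  have hx2 := (hden t ht.1.le (hIccT t ⟨ht.1.le, ht.2.le⟩)).1
  nlinarith
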